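/- Let K be a field of characteristic 0 and k ≥ 2. Let F ∈ K⟦x⟧ satisfy F(x) = G(x^l) for some l ≥ 1 and G ∈ K⟦x⟧. Suppose Σ_{i=0}^n P_i(x) F(x^{k^i}) = A(x) with P₀,…,P_n, A ∈ K[x] and not all P_i zero. Then there exist Q₀,…,Q_n, B ∈ K[x] with Q₀ ≠ 0 such that Σ_{i=0}^n Q_i(x^l) F(x^{k^i}) = B(x^l). -/

import Mathlib

open Polynomial
open scoped Classical

/-- Substitution `x ↦ x^m` in a formal power series (for `m ≥ 1`): the Mahler operator. -/
noncomputable def substPow {K : Type*} [Semiring K] (m : ℕ) (F : PowerSeries K) :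
    PowerSeries K :=
  PowerSeries.mk fun n => if m ≠ 0 ∧ m ∣ n then PowerSeries.coeff (R := K) (n / m) F else 0

/-- A polynomial regarded as a power series. -/
noncomputable def toPS {K : Type*} [Semiring K] (P : Polynomial K) : PowerSeries K :=
  PowerSeries.mk fun n => P.coeff n

section Aux
variable {K : Type*} [CommSemiring K]

lemma coeff_substPow (m : ℕ) (F : PowerSeries K) (n : ℕ) :
    PowerSeries.coeff (R := K) n (substPow m F) =
      if m ≠ 0 ∧ m ∣ n then PowerSeries.coeff (R := K) (n / m) F else 0 := by
  simp [substPow]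

lemma coeff_toPS (P : Polynomial K) (n : ℕ) :
    PowerSeries.coeff (R := K) n (toPS P) = P.coeff n := by simp [toPS]

lemma toPS_zero : toPS (0 : Polynomial K) = 0 := by
  ext n; simp [coeff_toPS]

lemma substPow_substPow (a b : ℕ) (ha : a ≠ 0) (hb : b ≠ 0) (F : PowerSeries K) :
    substPow a (substPow b F) = substPow (a * b) F := by
  ext n
  simp only [coeff_substPow]
  by_cases h2 : a * b ∣ n
  · have hdvd : a ∣ n := dvd_trans (dvd_mul_right a b) h2
    rw [if_pos ⟨ha, hdvd⟩, if_pos ⟨hb, (Nat.dvd_div_iff_mul_dvd hdvd).mpr h2⟩,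
      if_pos ⟨mul_ne_zero ha hb, h2⟩, Nat.div_div_eq_div_mul]
  · by_cases hdvd : a ∣ n
    · rw [if_pos ⟨ha, hdvd⟩, if_neg (fun hc => h2 ((Nat.dvd_div_iff_mul_dvd hdvd).mp hc.2)),
        if_neg (fun hc => h2 hc.2)]
    · rw [if_neg (fun hc => hdvd hc.2), if_neg (fun hc => h2 hc.2)]

lemma substPow_sum {ι : Type*} (m : ℕ) (s : Finset ι) (f : ι → PowerSeries K) :
    substPow m (∑ i ∈ s, f i) = ∑ i ∈ s, substPow m (f i) := by
  ext n
  rw [map_sum]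
  simp only [coeff_substPow]
  by_cases h : m ≠ 0 ∧ m ∣ n
  · simp only [if_pos h, map_sum]
  · simp only [if_neg h, Finset.sum_const_zero]

lemma substPow_mul (m : ℕ) (hm : m ≠ 0) (F G : PowerSeries K) :
    substPow m (F * G) = substPow m F * substPow m G := by
  have hm' : 0 < m := Nat.pos_of_ne_zero hm
  ext n
  rw [coeff_substPow]
  by_cases h : m ∣ n
  · obtain ⟨c, rfl⟩ := h
    rw [if_pos ⟨hm, dvd_mul_right m c⟩, Nat.mul_div_cancel_left c hm',
      PowerSeries.coeff_mul, PowerSeries.coeff_mul]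
    calc (∑ p ∈ Finset.HasAntidiagonal.antidiagonal c,
            PowerSeries.coeff (R := K) p.1 F * PowerSeries.coeff (R := K) p.2 G)
        = ∑ p ∈ (Finset.HasAntidiagonal.antidiagonal (m * c)).filter (fun p => m ∣ p.1),
            PowerSeries.coeff (R := K) p.1 (substPow m F) * PowerSeries.coeff (R := K) p.2 (substPow m G) := by
          refine Finset.sum_nbij' (fun q => (m * q.1, m * q.2)) (fun p => (p.1 / m, p.2 / m))
            ?_ ?_ ?_ ?_ ?_
          · intro q hq
            rw [Finset.HasAntidiagonal.mem_antidiagonal] at hq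
            simp only [Finset.mem_filter, Finset.HasAntidiagonal.mem_antidiagonal]
            exact ⟨by rw [← Nat.mul_add, hq], dvd_mul_right m _⟩
          · intro p hp
            simp only [Finset.mem_filter, Finset.HasAntidiagonal.mem_antidiagonal] at hp
            obtain ⟨hsum, h1⟩ := hp
            have h2 : m ∣ p.2 := (Nat.dvd_add_right h1).mp (hsum ▸ dvd_mul_right m c)
            obtain ⟨a, ha⟩ := h1
            obtain ⟨b, hb⟩ := h2
            simp only [Finset.HasAntidiagonal.mem_antidiagonal, ha, hb, Nat.mul_div_cancel_left _ hm']
            rw [ha, hb, ← Nat.mul_add] at hsum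
            exact Nat.eq_of_mul_eq_mul_left hm' hsum
          · intro q _
            simp [Nat.mul_div_cancel_left _ hm']
          · intro p hp
            simp only [Finset.mem_filter, Finset.HasAntidiagonal.mem_antidiagonal] at hp
            obtain ⟨hsum, h1⟩ := hp
            have h2 : m ∣ p.2 := (Nat.dvd_add_right h1).mp (hsum ▸ dvd_mul_right m c)
            simp [Nat.mul_div_cancel' h1, Nat.mul_div_cancel' h2]
          · intro q _
            simp [coeff_substPow, hm, dvd_mul_right, Nat.mul_div_cancel_left _ hm']
      _ = ∑ p ∈ Finset.HasAntidiagonal.antidiagonal (m * c),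
            PowerSeries.coeff (R := K) p.1 (substPow m F) * PowerSeries.coeff (R := K) p.2 (substPow m G) := by
          refine Finset.sum_filter_of_ne ?_
          intro p _ hne
          by_contra h1
          apply hne
          rw [coeff_substPow, if_neg (fun hc => h1 hc.2), zero_mul]
  · rw [if_neg (fun hc => h hc.2), PowerSeries.coeff_mul]
    symm
    refine Finset.sum_eq_zero ?_
    intro p hp
    rw [Finset.HasAntidiagonal.mem_antidiagonal] at hp
    by_cases h1 : m ∣ p.1
    · have h2 : ¬ m ∣ p.2 := fun h2 => h (hp ▸ dvd_add h1 h2)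
      rw [coeff_substPow (F := G), if_neg (fun hc => h2 hc.2), mul_zero]
    · rw [coeff_substPow (F := F), if_neg (fun hc => h1 hc.2), zero_mul]

lemma toPS_comp_X_pow (p : ℕ) (hp : p ≠ 0) (Q : Polynomial K) :
    toPS (Q.comp (X ^ p)) = substPow p (toPS Q) := by
  ext n
  rw [coeff_toPS, ← Polynomial.expand_eq_comp_X_pow,
    Polynomial.coeff_expand (Nat.pos_of_ne_zero hp), coeff_substPow]
  by_cases h : p ∣ n
  · rw [if_pos h, if_pos ⟨hp, h⟩, coeff_toPS]
  · rw [if_neg h, if_neg (fun hc => h hc.2)]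

/-- The Cartier operator at the power-series level. -/
noncomputable def cartierPS (M r : ℕ) (F : PowerSeries K) : PowerSeries K :=
  PowerSeries.mk fun n => PowerSeries.coeff (R := K) (M * n + r) F

lemma coeff_cartierPS (M r : ℕ) (F : PowerSeries K) (n : ℕ) :
    PowerSeries.coeff (R := K) n (cartierPS M r F) = PowerSeries.coeff (R := K) (M * n + r) F := by
  simp [cartierPS]

lemma cartierPS_sum {ι : Type*} (M r : ℕ) (s : Finset ι) (f : ι → PowerSeries K) :
    cartierPS M r (∑ i ∈ s, f i) = ∑ i ∈ s, cartierPS M r (f i) := by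
  ext n
  rw [map_sum]
  simp only [coeff_cartierPS, map_sum]

/-- The Cartier operator at the polynomial level. -/
noncomputable def cartierPoly (M r : ℕ) (P : Polynomial K) : Polynomial K :=
  ∑ j ∈ Finset.range (P.natDegree + 1), C (P.coeff (M * j + r)) * X ^ j

lemma coeff_cartierPoly (M r : ℕ) (hM : M ≠ 0) (P : Polynomial K) (a : ℕ) :
    (cartierPoly M r P).coeff a = P.coeff (M * a + r) := by
  rw [cartierPoly, Polynomial.finset_sum_coeff]
  simp only [coeff_C_mul, coeff_X_pow, mul_ite, mul_one, mul_zero]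
  rw [Finset.sum_ite_eq (Finset.range (P.natDegree + 1)) a (fun j => P.coeff (M * j + r))]
  by_cases h : a ∈ Finset.range (P.natDegree + 1)
  · rw [if_pos h]
  · rw [if_neg h]
    symm
    apply Polynomial.coeff_eq_zero_of_natDegree_lt
    rw [Finset.mem_range, not_lt] at h
    have : a ≤ M * a := Nat.le_mul_of_pos_left a (Nat.pos_of_ne_zero hM)
    omega


lemma cartier_nat_aux {M r n x y : ℕ} (hr : r < M) (hsum : x + y = M * n + r)
    (hd : M ∣ y) : ∃ b, b ≤ n ∧ y = M * b ∧ x = M * (n - b) + r := by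
  obtain ⟨b, hb⟩ := hd
  refine ⟨b, ?_, hb, ?_⟩
  · by_contra hbn
    have h3 : M * (n + 1) ≤ M * b := Nat.mul_le_mul le_rfl (by omega)
    rw [Nat.mul_add, mul_one] at h3
    rw [hb] at hsum
    linarith
  · have hbn : b ≤ n := by
      by_contra hbn
      have h3 : M * (n + 1) ≤ M * b := Nat.mul_le_mul le_rfl (by omega)
      rw [Nat.mul_add, mul_one] at h3
      rw [hb] at hsum
      linarith
    obtain ⟨d, hd2⟩ : ∃ d, n = d + b := ⟨n - b, by omega⟩
    rw [hb, hd2, Nat.mul_add] at hsum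
    have h5 : n - b = d := by omega
    rw [h5]
    linarith

/-- Key Cartier identity: `Δ_r (P(x) · G(x^M)) = (Δ_r P)(x) · G(x)` for `r < M`. -/
lemma cartierPS_toPS_mul_substPow (M r : ℕ) (hr : r < M) (P : Polynomial K)
    (G : PowerSeries K) :
    cartierPS M r (toPS P * substPow M G) = toPS (cartierPoly M r P) * G := by
  have hM : M ≠ 0 := by omega
  have hM' : 0 < M := by omega
  ext n
  rw [coeff_cartierPS, PowerSeries.coeff_mul, PowerSeries.coeff_mul]
  calc (∑ p ∈ Finset.HasAntidiagonal.antidiagonal (M * n + r),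
          PowerSeries.coeff (R := K) p.1 (toPS P) * PowerSeries.coeff (R := K) p.2 (substPow M G))
      = ∑ p ∈ (Finset.HasAntidiagonal.antidiagonal (M * n + r)).filter (fun p => M ∣ p.2),
          PowerSeries.coeff (R := K) p.1 (toPS P) * PowerSeries.coeff (R := K) p.2 (substPow M G) := by
        symm
        refine Finset.sum_filter_of_ne ?_
        intro p _ hne
        by_contra h1
        exact hne (by rw [coeff_substPow, if_neg (fun hc => h1 hc.2), mul_zero])
    _ = ∑ q ∈ Finset.HasAntidiagonal.antidiagonal n,
          PowerSeries.coeff (R := K) q.1 (toPS (cartierPoly M r P)) * PowerSeries.coeff (R := K) q.2 G := by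
        refine Finset.sum_nbij' (fun p => ((p.1 - r) / M, p.2 / M))
          (fun q => (M * q.1 + r, M * q.2)) ?_ ?_ ?_ ?_ ?_
        · intro p hp
          simp only [Finset.mem_filter, Finset.HasAntidiagonal.mem_antidiagonal] at hp
          obtain ⟨b, hbn, hb, hp1⟩ := cartier_nat_aux hr hp.1 hp.2
          simp only [Finset.HasAntidiagonal.mem_antidiagonal, hp1, hb, Nat.add_sub_cancel,
            Nat.mul_div_cancel_left _ hM']
          omega
        · intro q hq
          rw [Finset.HasAntidiagonal.mem_antidiagonal] at hq
          simp only [Finset.mem_filter, Finset.HasAntidiagonal.mem_antidiagonal]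
          refine ⟨?_, dvd_mul_right M _⟩
          rw [← hq]
          ring
        · intro p hp
          simp only [Finset.mem_filter, Finset.HasAntidiagonal.mem_antidiagonal] at hp
          obtain ⟨b, hbn, hb, hp1⟩ := cartier_nat_aux hr hp.1 hp.2
          simp only [hp1, hb, Nat.add_sub_cancel, Nat.mul_div_cancel_left _ hM']
          rw [← hp1, ← hb]
        · intro q _
          simp only [Nat.add_sub_cancel, Nat.mul_div_cancel_left _ hM']
        · intro p hp
          simp only [Finset.mem_filter, Finset.HasAntidiagonal.mem_antidiagonal] at hp
          obtain ⟨b, hbn, hb, hp1⟩ := cartier_nat_aux hr hp.1 hp.2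
          simp only [coeff_toPS, coeff_substPow, coeff_cartierPoly M r hM, hp1, hb,
            Nat.add_sub_cancel, Nat.mul_div_cancel_left _ hM', hM, ne_eq,
            not_false_iff, dvd_mul_right, and_self, if_true]

lemma cartierPS_toPS (M r : ℕ) (hM : M ≠ 0) (A : Polynomial K) :
    cartierPS M r (toPS A) = toPS (cartierPoly M r A) := by
  ext n
  rw [coeff_cartierPS, coeff_toPS, coeff_toPS, coeff_cartierPoly M r hM]

end Aux

/-- If `F(x) = G(x^l)` satisfies an inhomogeneous Mahler-type equation
`Σ_{i=0}^n P_i(x) F(x^{k^i}) = A(x)` with not all `P_i` zero, then it satisfies one with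
all coefficients being polynomials in `x^l` and nonzero lowest coefficient `Q₀(x^l)`. -/
theorem mahler_equation_in_xl
    (K : Type*) [Field K] [CharZero K] (k l : ℕ) (hk : 2 ≤ k) (hl : 1 ≤ l)
    (F G : PowerSeries K) (hFG : F = substPow l G)
    (n : ℕ) (P : ℕ → Polynomial K) (A : Polynomial K)
    (hP : ∃ i ≤ n, P i ≠ 0)
    (heq : ∑ i ∈ Finset.range (n + 1), toPS (P i) * substPow (k ^ i) F = toPS A) :
    ∃ (Q : ℕ → Polynomial K) (B : Polynomial K), Q 0 ≠ 0 ∧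
      ∑ i ∈ Finset.range (n + 1), toPS ((Q i).comp (X ^ l)) * substPow (k ^ i) F =
        toPS (B.comp (X ^ l)) := by
  obtain ⟨iw, hiwn, hiw⟩ := hP
  have hex : ∃ i, P i ≠ 0 := ⟨iw, hiw⟩
  set i0 := Nat.find hex with hi0def
  have hP0 : P i0 ≠ 0 := Nat.find_spec hex
  have hi0n : i0 ≤ n := le_trans (Nat.find_min' hex hiw) hiwn
  have hk0 : k ≠ 0 := by omega
  have hl0 : l ≠ 0 := by omega
  set M := l * k ^ i0 with hMdef
  have hM0 : M ≠ 0 := mul_ne_zero hl0 (pow_ne_zero _ hk0)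
  set m0 := (P i0).natDegree with hm0
  set r := m0 % M with hrdef
  have hrM : r < M := Nat.mod_lt _ (Nat.pos_of_ne_zero hM0)
  set Qf : ℕ → Polynomial K := fun j => if j + i0 ≤ n then cartierPoly M r (P (j + i0)) else 0
    with hQf
  have hsubstF : ∀ i, i0 ≤ i →
      substPow (k ^ i) F = substPow M (substPow (k ^ (i - i0)) G) := by
    intro i hi
    rw [hFG, substPow_substPow _ _ (pow_ne_zero _ hk0) hl0,
      substPow_substPow M _ hM0 (pow_ne_zero _ hk0)]
    have h1 : i0 + (i - i0) = i := by omega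
    have harg : k ^ i * l = M * k ^ (i - i0) := by
      rw [hMdef]
      calc k ^ i * l = l * k ^ (i0 + (i - i0)) := by rw [h1, mul_comm]
        _ = l * k ^ i0 * k ^ (i - i0) := by rw [pow_add, mul_assoc]
    rw [harg]
  have hkey : ∑ j ∈ Finset.range (n + 1), toPS (Qf j) * substPow (k ^ j) G
      = toPS (cartierPoly M r A) := by
    have h1 := congrArg (cartierPS M r) heq
    rw [cartierPS_sum, cartierPS_toPS M r hM0] at h1
    rw [← h1]
    symm
    calc ∑ i ∈ Finset.range (n + 1), cartierPS M r (toPS (P i) * substPow (k ^ i) F)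
        = ∑ i ∈ Finset.Ico i0 (n + 1), cartierPS M r (toPS (P i) * substPow (k ^ i) F) := by
          symm
          apply Finset.sum_subset
          · intro x hx
            rw [Finset.mem_Ico] at hx
            rw [Finset.mem_range]
            omega
          · intro x hx hnx
            rw [Finset.mem_range] at hx
            rw [Finset.mem_Ico] at hnx
            have hx0 : P x = 0 := by
              by_contra hc
              exact hnx ⟨Nat.find_min' hex hc, by omega⟩
            rw [hx0, toPS_zero, zero_mul]
            ext t
            simp [coeff_cartierPS]
      _ = ∑ j ∈ Finset.range (n + 1 - i0),
            cartierPS M r (toPS (P (i0 + j)) * substPow (k ^ (i0 + j)) F) := by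
          rw [Finset.sum_Ico_eq_sum_range]
      _ = ∑ j ∈ Finset.range (n + 1 - i0), toPS (Qf j) * substPow (k ^ j) G := by
          apply Finset.sum_congr rfl
          intro j hj
          rw [Finset.mem_range] at hj
          have hji : j + i0 ≤ n := by omega
          rw [hsubstF (i0 + j) (by omega)]
          have he : i0 + j - i0 = j := by omega
          rw [he, cartierPS_toPS_mul_substPow M r hrM]
          have hq : Qf j = cartierPoly M r (P (i0 + j)) := by
            rw [hQf]
            simp only [if_pos hji]
            rw [add_comm j i0]
          rw [hq]
      _ = ∑ j ∈ Finset.range (n + 1), toPS (Qf j) * substPow (k ^ j) G := by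
          apply Finset.sum_subset
          · intro x hx
            rw [Finset.mem_range] at *
            omega
          · intro x hx hnx
            rw [Finset.mem_range] at hx hnx
            have hxx : ¬ (x + i0 ≤ n) := by omega
            rw [hQf]
            simp only [if_neg hxx]
            rw [toPS_zero, zero_mul]
  refine ⟨Qf, cartierPoly M r A, ?_, ?_⟩
  · have h0 : (Qf 0).coeff (m0 / M) = (P i0).coeff m0 := by
      rw [hQf]
      simp only [zero_add, if_pos hi0n]
      rw [coeff_cartierPoly M r hM0, hrdef, Nat.div_add_mod]
    intro hc
    rw [hc, Polynomial.coeff_zero] at h0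
    exact hP0 (Polynomial.leadingCoeff_eq_zero.mp h0.symm)
  · have hterm : ∀ i, toPS ((Qf i).comp (X ^ l)) * substPow (k ^ i) F
        = substPow l (toPS (Qf i) * substPow (k ^ i) G) := by
      intro i
      rw [substPow_mul l hl0, toPS_comp_X_pow l hl0]
      congr 1
      rw [hFG, substPow_substPow _ _ (pow_ne_zero _ hk0) hl0,
        substPow_substPow l _ hl0 (pow_ne_zero _ hk0), mul_comm]
    calc ∑ i ∈ Finset.range (n + 1), toPS ((Qf i).comp (X ^ l)) * substPow (k ^ i) F
        = ∑ i ∈ Finset.range (n + 1), substPow l (toPS (Qf i) * substPow (k ^ i) G) := by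
          exact Finset.sum_congr rfl fun i _ => hterm i
      _ = substPow l (∑ i ∈ Finset.range (n + 1), toPS (Qf i) * substPow (k ^ i) G) := by
          rw [substPow_sum]
      _ = substPow l (toPS (cartierPoly M r A)) := by rw [hkey]
      _ = toPS ((cartierPoly M r A).comp (X ^ l)) := by rw [toPS_comp_X_pow l hl0]
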